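/- Let x*, y* > 0 and let f : [-x*,x*] × [-y*,y*] → ℝ be a function of class C^{h+k}. Suppose that for each fixed x, f(x,y) = O(|y|^k) as y → 0, and for each fixed y, f(x,y) = O(|x|^h) as x → 0, with the implied constants uniform in the frozen variable. Then there exists a constant M > 0 such that |f(x,y)| ≤ M |x|^h |y|^k for all (x,y) ∈ [-x*,x*] × [-y*,y*]. -/

import Mathlib

open Set

/-- MVT-based bound: derivative bounded by `B*|t|^m` and `g 0 = 0` gives `|g t| ≤ B*|t|^(m+1)`. -/
lemma mvtBound {a B : ℝ} (ha : 0 < a) (hB : 0 ≤ B) {g g' : ℝ → ℝ}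
    (hg : ∀ t ∈ Icc (-a) a, HasDerivWithinAt g (g' t) (Icc (-a) a) t)
    (hg0 : g 0 = 0) {m : ℕ}
    (hb : ∀ t ∈ Icc (-a) a, |g' t| ≤ B * |t| ^ m) :
    ∀ t ∈ Icc (-a) a, |g t| ≤ B * |t| ^ (m + 1) := by
  intro t ht
  have h0 : (0:ℝ) ∈ Icc (-a) a := by constructor <;> simp [ha.le] <;> linarith
  have hsub : uIcc (0:ℝ) t ⊆ Icc (-a) a := uIcc_subset_Icc h0 ht
  have hconv : Convex ℝ (uIcc (0:ℝ) t) := convex_uIcc _ _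
  have hder : ∀ y ∈ uIcc (0:ℝ) t, HasDerivWithinAt g (g' y) (uIcc (0:ℝ) t) y :=
    fun y hy => (hg y (hsub hy)).mono hsub
  have hbd : ∀ y ∈ uIcc (0:ℝ) t, ‖g' y‖ ≤ B * |t| ^ m := by
    intro y hy
    have hyt : |y| ≤ |t| := by
      rcases le_total 0 t with h | h
      · rw [uIcc_of_le h] at hy; rw [abs_of_nonneg (hy.1), abs_of_nonneg h]; exact hy.2
      · rw [uIcc_of_ge h] at hy; rw [abs_of_nonpos (hy.2), abs_of_nonpos h]; linarith [hy.1]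
    calc ‖g' y‖ ≤ B * |y| ^ m := hb y (hsub hy)
      _ ≤ B * |t| ^ m :=
          mul_le_mul_of_nonneg_left (pow_le_pow_left₀ (abs_nonneg _) hyt m) hB
  have := hconv.norm_image_sub_le_of_norm_hasDerivWithin_le hder hbd
    (left_mem_uIcc) (right_mem_uIcc)
  rw [hg0, sub_zero, sub_zero] at this
  calc |g t| ≤ B * |t| ^ m * ‖t‖ := this
    _ = B * |t| ^ (m + 1) := by rw [Real.norm_eq_abs]; ring

/-- Iterated bound along a derivative chain with vanishing lower derivatives at 0. -/
lemma chainBound {a : ℝ} (ha : 0 < a) :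
    ∀ (n : ℕ) (p : ℕ → ℝ → ℝ) (B : ℝ), 0 ≤ B →
    (∀ j < n, ∀ t ∈ Icc (-a) a, HasDerivWithinAt (p j) (p (j+1) t) (Icc (-a) a) t) →
    (∀ j < n, p j 0 = 0) →
    (∀ t ∈ Icc (-a) a, |p n t| ≤ B) →
    ∀ t ∈ Icc (-a) a, |p 0 t| ≤ B * |t| ^ n := by
  intro n
  induction n with
  | zero => intro p B _ _ _ hB t ht; simpa using hB t ht
  | succ n IH =>
    intro p B hBnn hder hzero hB t ht
    have h1 : ∀ t ∈ Icc (-a) a, |p 1 t| ≤ B * |t| ^ n := by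
      apply IH (fun j => p (j+1)) B hBnn
      · exact fun j hj => hder (j+1) (by omega)
      · exact fun j hj => hzero (j+1) (by omega)
      · exact hB
    exact mvtBound ha hBnn (hder 0 (by omega)) (hzero 0 (by omega)) h1 t ht

section
variable {a : ℝ}


lemma chainVanish {δ C M : ℝ} (ha : 0 < a) (hδ : 0 < δ) (hC : 0 ≤ C) (hM : 0 ≤ M)
    (p : ℕ → ℝ → ℝ) (n : ℕ)
    (hder : ∀ j < n, ∀ t ∈ Icc (-a) a, HasDerivWithinAt (p j) (p (j+1) t) (Icc (-a) a) t)
    (hbd : ∀ j ≤ n, ∀ t ∈ Icc (-a) a, |p j t| ≤ M)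
    (hsm : ∀ t ∈ Icc (-a) a, |t| ≤ δ → |p 0 t| ≤ C * |t| ^ n) :
    ∀ j < n, p j 0 = 0 := by
  intro j
  induction j using Nat.strong_induction_on with
  | _ j IH =>
  intro hjn
  have hzero : ∀ i < j, p i 0 = 0 := fun i hi => IH i hi (hi.trans hjn)
  set c := p j 0 with hc
  set q : ℕ → ℝ → ℝ :=
    fun i t => p i t - c * (if i ≤ j then t ^ (j - i) / (Nat.factorial (j - i)) else 0) with hq
  have hqder : ∀ i < j + 1, ∀ t ∈ Icc (-a) a,
      HasDerivWithinAt (q i) (q (i+1) t) (Icc (-a) a) t := by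
    intro i hi t ht
    have hpi := hder i (by omega) t ht
    rcases lt_or_eq_of_le (Nat.lt_succ_iff.mp hi) with hij | hij
    · -- i < j
      have hm1 : 1 ≤ j - i := by omega
      set m := j - i with hmdef
      have hji : j - (i+1) = m - 1 := by omega
      have hfac : (Nat.factorial m : ℝ) = m * Nat.factorial (m-1) := by
        rw [← Nat.cast_mul]
        congr 1
        have hm : m = (m-1)+1 := by omega
        rw [hm, Nat.factorial_succ]
        congr 1 <;> omega
      have hply : HasDerivAt (fun t : ℝ => c * (t ^ m / (Nat.factorial m)))
          (c * (t ^ (m-1) / (Nat.factorial (m-1)))) t := by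
        have h2 := (hasDerivAt_pow m t).const_mul (c / (Nat.factorial m))
        have hfun : (fun t:ℝ => c / (Nat.factorial m) * t ^ m)
            = fun t:ℝ => c * (t ^ m / (Nat.factorial m)) := by funext u; ring
        rw [hfun] at h2
        refine h2.congr_deriv ?_
        have hmne : (m:ℝ) ≠ 0 := by
          simp only [ne_eq, Nat.cast_eq_zero]; omega
        have hfne : (Nat.factorial (m-1) : ℝ) ≠ 0 := by positivity
        rw [hfac]
        field_simp
      simp only [hq, if_pos hij.le, if_pos (by omega : i + 1 ≤ j), hji]
      exact hpi.sub (hply.hasDerivWithinAt)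
    · -- i = j
      subst hij
      simp only [hq, if_pos le_rfl, if_neg (by omega : ¬ i + 1 ≤ i), Nat.sub_self, pow_zero,
        Nat.factorial_zero, mul_zero, Nat.cast_one]
      simpa using hpi.sub_const (c * (1 / 1))
  have hqzero : ∀ i < j + 1, q i 0 = 0 := by
    intro i hi
    rcases lt_or_eq_of_le (Nat.lt_succ_iff.mp hi) with hij | hij
    · simp only [hq, if_pos hij.le, hzero i hij, zero_pow (by omega : j - i ≠ 0)]
      simp
    · subst hij; simp [hq, ← hc]
  have hqtop : ∀ t ∈ Icc (-a) a, |q (j+1) t| ≤ M := by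
    intro t ht
    simp only [hq, if_neg (by omega : ¬ j + 1 ≤ j), mul_zero, sub_zero]
    exact hbd (j+1) (by omega) t ht
  have hmain := chainBound ha (j+1) q M hM hqder hqzero hqtop
  by_contra hcne
  set K := (Nat.factorial j : ℝ) * (C + M) + 1 with hK
  have hfj : (0:ℝ) < Nat.factorial j := by positivity
  have hKpos : 0 < K := by positivity
  have hcpos : 0 < |c| := abs_pos.mpr hcne
  set t₀ := min a (min δ (min 1 (|c| / (2 * K)))) with ht₀
  have ht₀pos : 0 < t₀ := lt_min ha (lt_min hδ (lt_min one_pos (by positivity)))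
  have ht₀a : t₀ ≤ a := min_le_left _ _
  have ht₀δ : t₀ ≤ δ := le_trans (min_le_right _ _) (min_le_left _ _)
  have ht₀1 : t₀ ≤ 1 :=
    le_trans (min_le_right _ _) (le_trans (min_le_right _ _) (min_le_left _ _))
  have ht₀c : t₀ ≤ |c| / (2 * K) :=
    le_trans (min_le_right _ _) (le_trans (min_le_right _ _) (min_le_right _ _))
  have htmem : t₀ ∈ Icc (-a) a := ⟨by linarith, ht₀a⟩
  have habs : |t₀| = t₀ := abs_of_pos ht₀pos
  have h1 := hmain t₀ htmem
  have h2 := hsm t₀ htmem (by rw [habs]; exact ht₀δ)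
  have hq0 : q 0 t₀ = p 0 t₀ - c * (t₀ ^ j / (Nat.factorial j)) := by simp [hq]
  rw [hq0, habs] at h1
  rw [habs] at h2
  have hX : (0:ℝ) < t₀ ^ j := pow_pos ht₀pos j
  have e0 : |c * (t₀ ^ j / (Nat.factorial j))| ≤ |p 0 t₀| + M * t₀ ^ (j+1) := by
    calc |c * (t₀ ^ j / (Nat.factorial j))|
        = |p 0 t₀ - (p 0 t₀ - c * (t₀ ^ j / (Nat.factorial j)))| := by congr 1; ring
      _ ≤ |p 0 t₀| + |p 0 t₀ - c * (t₀ ^ j / (Nat.factorial j))| := abs_sub _ _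
      _ ≤ |p 0 t₀| + M * t₀ ^ (j+1) := by linarith
  have e1 : |c| * (t₀ ^ j / (Nat.factorial j)) ≤ (C + M) * t₀ ^ (j+1) := by
    have h2' : |p 0 t₀| ≤ C * t₀ ^ (j+1) := by
      refine h2.trans (mul_le_mul_of_nonneg_left ?_ hC)
      exact pow_le_pow_of_le_one ht₀pos.le ht₀1 (by omega)
    have habsm : |c * (t₀ ^ j / (Nat.factorial j))| = |c| * (t₀ ^ j / (Nat.factorial j)) := by
      rw [abs_mul, abs_of_pos (show (0:ℝ) < t₀ ^ j / (Nat.factorial j) by positivity)]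
    linarith [e0]
  have e2 : |c| ≤ K * t₀ := by
    have hpow : t₀ ^ (j+1) = t₀ * t₀ ^ j := by ring
    rw [hpow] at e1
    have step : |c| * t₀ ^ j ≤ (Nat.factorial j) * (C+M) * t₀ * t₀ ^ j := by
      have hmul := mul_le_mul_of_nonneg_left e1 hfj.le
      calc |c| * t₀ ^ j
          = (Nat.factorial j : ℝ) * (|c| * (t₀ ^ j / (Nat.factorial j))) := by field_simp
        _ ≤ (Nat.factorial j : ℝ) * ((C + M) * (t₀ * t₀ ^ j)) := hmul
        _ = (Nat.factorial j : ℝ) * (C+M) * t₀ * t₀ ^ j := by ring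
    have hfin := le_of_mul_le_mul_right step hX
    calc |c| ≤ (Nat.factorial j : ℝ) * (C+M) * t₀ := hfin
      _ ≤ K * t₀ := by
          apply mul_le_mul_of_nonneg_right _ ht₀pos.le
          rw [hK]; nlinarith [hfj]
  have e3 : K * t₀ ≤ |c| / 2 := by
    calc K * t₀ ≤ K * (|c| / (2*K)) := mul_le_mul_of_nonneg_left ht₀c hKpos.le
      _ = |c| / 2 := by field_simp
  have efin : |c| ≤ |c| / 2 := e2.trans e3
  clear_value c K t₀
  linarith
end

noncomputable def pd (S : Set (ℝ×ℝ)) (v : ℝ×ℝ) (g : ℝ×ℝ → ℝ) : ℝ×ℝ → ℝ :=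
  fun p => fderivWithin ℝ g S p v

def rect (xs ys : ℝ) : Set (ℝ×ℝ) := Icc (-xs) xs ×ˢ Icc (-ys) ys

section
variable {xs ys : ℝ}


lemma hSu (hxs : 0 < xs) (hys : 0 < ys) : UniqueDiffOn ℝ (rect xs ys) :=
  (uniqueDiffOn_Icc (show -xs < xs by linarith)).prod (uniqueDiffOn_Icc (show -ys < ys by linarith))

lemma pd_contDiffOn (hxs : 0 < xs) (hys : 0 < ys) {g : ℝ×ℝ → ℝ} {m : ℕ} {v : ℝ×ℝ}
    (hg : ContDiffOn ℝ (m+1 : ℕ) g (rect xs ys)) : ContDiffOn ℝ (m : ℕ) (pd (rect xs ys) v g) (rect xs ys) := by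
  have h1 : ContDiffOn ℝ (m : ℕ) (fderivWithin ℝ g (rect xs ys)) (rect xs ys) := by
    apply hg.fderivWithin (hSu hxs hys)
    norm_cast
  exact h1.clm_apply contDiffOn_const

lemma pd_iter_contDiffOn (hxs : 0 < xs) (hys : 0 < ys) {v : ℝ×ℝ} :
    ∀ (i m : ℕ) (g : ℝ×ℝ → ℝ), ContDiffOn ℝ (i+m : ℕ) g (rect xs ys) →
      ContDiffOn ℝ (m : ℕ) ((pd (rect xs ys) v)^[i] g) (rect xs ys) := by
  intro i
  induction i with
  | zero => intro m g hg; simpa using hg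
  | succ i IH =>
    intro m g hg
    rw [Function.iterate_succ_apply]
    refine IH m _ (pd_contDiffOn hxs hys ?_)
    have : (i + 1) + m = i + (m + 1) := by omega
    rwa [this] at hg

lemma hderY {g : ℝ×ℝ → ℝ} (hg : DifferentiableOn ℝ g (rect xs ys)) {x t : ℝ}
    (hx : x ∈ Icc (-xs) xs) (ht : t ∈ Icc (-ys) ys) :
    HasDerivWithinAt (fun s => g (x, s)) (pd (rect xs ys) ((0:ℝ),(1:ℝ)) g (x,t)) (Icc (-ys) ys) t := by
  have hc : HasDerivWithinAt (fun s : ℝ => ((x, s) : ℝ×ℝ)) ((0:ℝ),(1:ℝ)) (Icc (-ys) ys) t :=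
    ((hasDerivAt_const t x).prodMk (hasDerivAt_id t)).hasDerivWithinAt
  have hF := (hg (x,t) ⟨hx, ht⟩).hasFDerivWithinAt
  exact hF.comp_hasDerivWithinAt t hc (fun s hs => ⟨hx, hs⟩)

lemma hderX {g : ℝ×ℝ → ℝ} (hg : DifferentiableOn ℝ g (rect xs ys)) {x t : ℝ}
    (hx : x ∈ Icc (-xs) xs) (ht : t ∈ Icc (-ys) ys) :
    HasDerivWithinAt (fun s => g (s, t)) (pd (rect xs ys) ((1:ℝ),(0:ℝ)) g (x,t)) (Icc (-xs) xs) x := by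
  have hc : HasDerivWithinAt (fun s : ℝ => ((s, t) : ℝ×ℝ)) ((1:ℝ),(0:ℝ)) (Icc (-xs) xs) x :=
    ((hasDerivAt_id x).prodMk (hasDerivAt_const x t)).hasDerivWithinAt
  have hF := (hg (x,t) ⟨hx, ht⟩).hasFDerivWithinAt
  exact hF.comp_hasDerivWithinAt x hc (fun s hs => (⟨hs, ht⟩ : (s, t) ∈ rect xs ys))

/-- propagation of vanishing on the segment {0} × Y under a y-derivative -/
lemma pdY_zero (hxs : 0 < xs) (hys : 0 < ys) {g : ℝ×ℝ → ℝ} (hg : DifferentiableOn ℝ g (rect xs ys))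
    (h0 : ∀ t ∈ Icc (-ys) ys, g (0, t) = 0) :
    ∀ t ∈ Icc (-ys) ys, pd (rect xs ys) ((0:ℝ),(1:ℝ)) g (0,t) = 0 := by
  intro t ht
  have hx0 : (0:ℝ) ∈ Icc (-xs) xs := by constructor <;> linarith
  have hd := hderY hg hx0 ht
  have hz : HasDerivWithinAt (fun _ : ℝ => (0:ℝ)) (pd (rect xs ys) ((0:ℝ),(1:ℝ)) g (0,t)) (Icc (-ys) ys) t :=
    hd.congr (fun y hy => (h0 y hy).symm) (h0 t ht).symm
  have hu := (uniqueDiffOn_Icc (show -ys < ys by linarith)) t ht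
  exact (hu.eq_deriv _ hz (hasDerivWithinAt_const t _ 0)).symm ▸ rfl
end

section
variable {xs ys : ℝ}

lemma rect_closure_interior (hxs : 0 < xs) (hys : 0 < ys) {p : ℝ×ℝ} (hp : p ∈ rect xs ys) :
    p ∈ closure (interior (rect xs ys)) := by
  rw [show (rect xs ys) = Icc (-xs) xs ×ˢ Icc (-ys) ys from rfl, interior_prod_eq,
    interior_Icc, interior_Icc, closure_prod_eq,
    closure_Ioo (show (-xs) ≠ xs by intro hcon; linarith),
    closure_Ioo (show (-ys) ≠ ys by intro hcon; linarith)]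
  exact hp

lemma comm2 (hxs : 0 < xs) (hys : 0 < ys) {g : ℝ×ℝ → ℝ}
    (hg : ContDiffOn ℝ 2 g (rect xs ys)) (v w : ℝ×ℝ) :
    ∀ p ∈ rect xs ys, pd (rect xs ys) v (pd (rect xs ys) w g) p
      = pd (rect xs ys) w (pd (rect xs ys) v g) p := by
  intro p hp
  have hdiff : DifferentiableWithinAt ℝ (fderivWithin ℝ g (rect xs ys)) (rect xs ys) p := by
    have h1 : ContDiffOn ℝ 1 (fderivWithin ℝ g (rect xs ys)) (rect xs ys) :=
      hg.fderivWithin (hSu hxs hys) (by norm_num)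
    exact (h1.differentiableOn one_ne_zero) p hp
  have key : ∀ u₁ u₂ : ℝ×ℝ, pd (rect xs ys) u₁ (pd (rect xs ys) u₂ g) p
      = (fderivWithin ℝ (fderivWithin ℝ g (rect xs ys)) (rect xs ys) p u₁) u₂ := by
    intro u₁ u₂
    have := fderivWithin_clm_apply ((hSu hxs hys) p hp) hdiff
      (differentiableWithinAt_const u₂)
    show fderivWithin ℝ (fun q => (fderivWithin ℝ g (rect xs ys) q) u₂) (rect xs ys) p u₁ = _
    rw [this]
    simp [fderivWithin_const_apply]
  rw [key v w, key w v]
  have hsym : IsSymmSndFDerivWithinAt ℝ g (rect xs ys) p :=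
    (hg.contDiffWithinAt hp).isSymmSndFDerivWithinAt (by norm_num) (hSu hxs hys)
      (rect_closure_interior hxs hys hp) hp
  exact hsym v w

lemma pd_congr {g₁ g₂ : ℝ×ℝ → ℝ} {v : ℝ×ℝ} (h : EqOn g₁ g₂ (rect xs ys)) :
    EqOn (pd (rect xs ys) v g₁) (pd (rect xs ys) v g₂) (rect xs ys) := by
  intro p hp
  show fderivWithin ℝ g₁ (rect xs ys) p v = fderivWithin ℝ g₂ (rect xs ys) p v
  rw [fderivWithin_congr h (h hp)]

lemma pd_iter_congr {g₁ g₂ : ℝ×ℝ → ℝ} {v : ℝ×ℝ} (m : ℕ) (h : EqOn g₁ g₂ (rect xs ys)) :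
    EqOn ((pd (rect xs ys) v)^[m] g₁) ((pd (rect xs ys) v)^[m] g₂) (rect xs ys) := by
  induction m generalizing g₁ g₂ with
  | zero => simpa using h
  | succ m IH =>
    rw [Function.iterate_succ_apply, Function.iterate_succ_apply]
    exact IH (pd_congr h)

lemma comm1 (hxs : 0 < xs) (hys : 0 < ys) {v w : ℝ×ℝ} :
    ∀ (kk : ℕ) (g : ℝ×ℝ → ℝ), ContDiffOn ℝ (kk+1 : ℕ) g (rect xs ys) →
    EqOn (pd (rect xs ys) v ((pd (rect xs ys) w)^[kk] g))
      ((pd (rect xs ys) w)^[kk] (pd (rect xs ys) v g)) (rect xs ys) := by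
  intro kk
  induction kk with
  | zero => intro g _; exact fun p _ => rfl
  | succ kk IH =>
    intro g hg
    have hg2 : ContDiffOn ℝ 2 g (rect xs ys) := hg.of_le (by exact_mod_cast by omega)
    have hgw : ContDiffOn ℝ (kk+1 : ℕ) (pd (rect xs ys) w g) (rect xs ys) :=
      pd_contDiffOn hxs hys (by exact_mod_cast hg)
    intro p hp
    rw [Function.iterate_succ_apply]
    have h1 := IH (pd (rect xs ys) w g) hgw hp
    rw [h1]
    have h2 : EqOn ((pd (rect xs ys) w)^[kk] (pd (rect xs ys) v (pd (rect xs ys) w g)))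
        ((pd (rect xs ys) w)^[kk] (pd (rect xs ys) w (pd (rect xs ys) v g))) (rect xs ys) :=
      pd_iter_congr kk (fun q hq => comm2 hxs hys hg2 v w q hq)
    rw [h2 hp, ← Function.iterate_succ_apply]

lemma commIter (hxs : 0 < xs) (hys : 0 < ys) {v w : ℝ×ℝ} (kk : ℕ) :
    ∀ (i : ℕ) (g : ℝ×ℝ → ℝ), ContDiffOn ℝ (i + kk : ℕ) g (rect xs ys) →
    EqOn ((pd (rect xs ys) v)^[i] ((pd (rect xs ys) w)^[kk] g))
      ((pd (rect xs ys) w)^[kk] ((pd (rect xs ys) v)^[i] g)) (rect xs ys) := by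
  intro i
  induction i with
  | zero => intro g _; exact fun p _ => rfl
  | succ i IH =>
    intro g hg
    intro p hp
    rw [Function.iterate_succ_apply]
    have e1 : EqOn ((pd (rect xs ys) v)^[i] (pd (rect xs ys) v ((pd (rect xs ys) w)^[kk] g)))
        ((pd (rect xs ys) v)^[i] ((pd (rect xs ys) w)^[kk] (pd (rect xs ys) v g))) (rect xs ys) :=
      pd_iter_congr i (comm1 hxs hys kk g (hg.of_le (by exact_mod_cast by omega)))
    rw [e1 hp]
    have hgv : ContDiffOn ℝ (i + kk : ℕ) (pd (rect xs ys) v g) (rect xs ys) := by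
      apply pd_contDiffOn hxs hys
      have : (i + kk) + 1 = (i+1) + kk := by omega
      exact_mod_cast this ▸ hg
    rw [IH (pd (rect xs ys) v g) hgv hp, ← Function.iterate_succ_apply]

lemma boundFam (hxs : 0 < xs) (hys : 0 < ys) (F : ℕ → ℝ×ℝ → ℝ) :
    ∀ (n : ℕ), (∀ j ≤ n, ContinuousOn (F j) (rect xs ys)) →
    ∃ M, 0 ≤ M ∧ ∀ j ≤ n, ∀ p ∈ rect xs ys, |F j p| ≤ M := by
  have hcomp : IsCompact (rect xs ys) := (isCompact_Icc).prod (isCompact_Icc)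
  intro n
  induction n with
  | zero =>
    intro hF
    obtain ⟨c, hc⟩ := hcomp.exists_bound_of_continuousOn (hF 0 le_rfl)
    refine ⟨max c 0, le_max_right _ _, ?_⟩
    intro j hj p hp
    interval_cases j
    exact le_trans (by simpa [Real.norm_eq_abs] using hc p hp) (le_max_left _ _)
  | succ n IH =>
    intro hF
    obtain ⟨M1, hM1nn, hM1⟩ := IH (fun j hj => hF j (by omega))
    obtain ⟨c, hc⟩ := hcomp.exists_bound_of_continuousOn (hF (n+1) le_rfl)
    refine ⟨max M1 (max c 0), le_trans hM1nn (le_max_left _ _), ?_⟩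
    intro j hj p hp
    rcases Nat.lt_succ_iff_lt_or_eq.mp (Nat.lt_succ_of_le hj) with h | h
    · exact le_trans (hM1 j (by omega) p hp) (le_max_left _ _)
    · subst h
      refine le_trans (by simpa [Real.norm_eq_abs] using hc p hp) ?_
      exact le_trans (le_max_left _ _) (le_max_right _ _)
end

theorem stmt0 (h k : ℕ) (hh : 0 < h) (hk : 0 < k) (xs ys : ℝ) (hxs : 0 < xs) (hys : 0 < ys)
    (f : ℝ × ℝ → ℝ)
    (hf : ContDiffOn ℝ (h + k) f (Icc (-xs) xs ×ˢ Icc (-ys) ys))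
    (C : ℝ) (hC : 0 < C) (δ : ℝ) (hδ : 0 < δ)
    (hy : ∀ x ∈ Icc (-xs) xs, ∀ y ∈ Icc (-ys) ys, |y| ≤ δ → |f (x, y)| ≤ C * |y| ^ k)
    (hx : ∀ x ∈ Icc (-xs) xs, ∀ y ∈ Icc (-ys) ys, |x| ≤ δ → |f (x, y)| ≤ C * |x| ^ h) :
    ∃ M > 0, ∀ x ∈ Icc (-xs) xs, ∀ y ∈ Icc (-ys) ys,
      |f (x, y)| ≤ M * |x| ^ h * |y| ^ k := by
  have hf' : ContDiffOn ℝ ((h + k : ℕ)) f (rect xs ys) := hf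
  have hx0 : (0:ℝ) ∈ Icc (-xs) xs := by constructor <;> linarith
  have hy0 : (0:ℝ) ∈ Icc (-ys) ys := by constructor <;> linarith
  set e1 : ℝ×ℝ := ((1:ℝ),(0:ℝ)) with he1
  set e2 : ℝ×ℝ := ((0:ℝ),(1:ℝ)) with he2
  -- smoothness of iterated partials
  have hsm1 : ∀ j ≤ h + k, ContDiffOn ℝ ((h + k - j : ℕ)) ((pd (rect xs ys) e1)^[j] f)
      (rect xs ys) := by
    intro j hj
    apply pd_iter_contDiffOn hxs hys j (h+k-j) f
    have hje : j + (h + k - j) = h + k := by omega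
    rw [hje]; exact hf'
  have hsm2 : ∀ j ≤ h + k, ContDiffOn ℝ ((h + k - j : ℕ)) ((pd (rect xs ys) e2)^[j] f)
      (rect xs ys) := by
    intro j hj
    apply pd_iter_contDiffOn hxs hys j (h+k-j) f
    have hje : j + (h + k - j) = h + k := by omega
    rw [hje]; exact hf'
  set G : ℝ×ℝ → ℝ := (pd (rect xs ys) e2)^[k] f with hG
  have hGsm : ContDiffOn ℝ ((h : ℕ)) G (rect xs ys) := by
    rw [hG]
    apply pd_iter_contDiffOn hxs hys k h f
    have hje : k + h = h + k := by omega
    rw [hje]; exact hf'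
  have hmixed : ∀ i ≤ h, ContDiffOn ℝ ((h - i : ℕ)) ((pd (rect xs ys) e1)^[i] G)
      (rect xs ys) := by
    intro i hi
    apply pd_iter_contDiffOn hxs hys i (h-i) G
    have hje : i + (h - i) = h := by omega
    rw [hje]; exact hGsm
  -- bounds
  obtain ⟨M1, hM1nn, hM1⟩ := boundFam hxs hys (fun j => (pd (rect xs ys) e1)^[j] f) (h+k)
    (fun j hj => (hsm1 j hj).continuousOn)
  obtain ⟨M2, hM2nn, hM2⟩ := boundFam hxs hys (fun j => (pd (rect xs ys) e2)^[j] f) (h+k)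
    (fun j hj => (hsm2 j hj).continuousOn)
  obtain ⟨B, hBnn, hB⟩ := boundFam hxs hys (fun _ => (pd (rect xs ys) e1)^[h] G) 0
    (fun j hj => by
      have := (hmixed h le_rfl).continuousOn
      simpa using this)
  -- (A) x-direction vanishing at each frozen u
  have hAz : ∀ u ∈ Icc (-ys) ys, ∀ i < h, (pd (rect xs ys) e1)^[i] f (0, u) = 0 := by
    intro u hu
    apply chainVanish hxs hδ hC.le hM1nn (fun j x => (pd (rect xs ys) e1)^[j] f (x, u)) h
    · intro j hj x hxm
      have hdiff : DifferentiableOn ℝ ((pd (rect xs ys) e1)^[j] f) (rect xs ys) := by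
        refine (hsm1 j (by omega)).differentiableOn ?_
        exact_mod_cast (by omega : h + k - j ≠ 0)
      show HasDerivWithinAt (fun s => (pd (rect xs ys) e1)^[j] f (s, u))
        ((pd (rect xs ys) e1)^[j+1] f (x, u)) (Icc (-xs) xs) x
      rw [Function.iterate_succ_apply']
      exact hderX hdiff hxm hu
    · intro j hj x hxm
      exact hM1 j (by omega) (x, u) ⟨hxm, hu⟩
    · intro x hxm hxδ
      simpa using hx x hxm u hu hxδ
  -- (B) propagate vanishing in y
  have hBz : ∀ i < h, ∀ m ≤ k, ∀ u ∈ Icc (-ys) ys,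
      (pd (rect xs ys) e2)^[m] ((pd (rect xs ys) e1)^[i] f) (0, u) = 0 := by
    intro i hi m
    induction m with
    | zero =>
      intro _ u hu
      simpa using hAz u hu i hi
    | succ m IH =>
      intro hm u hu
      rw [Function.iterate_succ_apply']
      refine pdY_zero hxs hys ?_ (fun t ht => IH (by omega) t ht) u hu
      have hcd : ContDiffOn ℝ ((m + 1 : ℕ)) ((pd (rect xs ys) e1)^[i] f) (rect xs ys) := by
        refine (hsm1 i (by omega)).of_le ?_
        exact_mod_cast (by omega : m + 1 ≤ h + k - i)
      have hdd := pd_iter_contDiffOn hxs hys (v := e2) m 1 ((pd (rect xs ys) e1)^[i] f) hcd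
      exact hdd.differentiableOn (by simp)
  -- (C) commute to get zeros of the mixed chain
  have hq0 : ∀ i < h, ∀ u ∈ Icc (-ys) ys, (pd (rect xs ys) e1)^[i] G (0, u) = 0 := by
    intro i hi u hu
    have hmem : ((0:ℝ), u) ∈ rect xs ys := ⟨hx0, hu⟩
    have hcomm := commIter hxs hys (v := e1) (w := e2) k i f
      (by
        refine hf'.of_le ?_
        exact_mod_cast (by omega : i + k ≤ h + k)) hmem
    rw [hG]
    rw [hcomm]
    exact hBz i hi k le_rfl u hu
  -- (E) the key bound |G (x,u)| ≤ B * |x|^h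
  have hGbd : ∀ u ∈ Icc (-ys) ys, ∀ x ∈ Icc (-xs) xs, |G (x, u)| ≤ B * |x| ^ h := by
    intro u hu x hxm
    have := chainBound hxs h (fun i x => (pd (rect xs ys) e1)^[i] G (x, u)) B hBnn
      ?_ ?_ ?_ x hxm
    · simpa using this
    · intro i hi t htm
      have hdiff : DifferentiableOn ℝ ((pd (rect xs ys) e1)^[i] G) (rect xs ys) := by
        refine (hmixed i (by omega)).differentiableOn ?_
        exact_mod_cast (by omega : h - i ≠ 0)
      show HasDerivWithinAt (fun s => (pd (rect xs ys) e1)^[i] G (s, u))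
        ((pd (rect xs ys) e1)^[i+1] G (t, u)) (Icc (-xs) xs) t
      rw [Function.iterate_succ_apply']
      exact hderX hdiff htm hu
    · intro i hi
      exact hq0 i hi u hu
    · intro t htm
      exact hB 0 le_rfl (t, u) ⟨htm, hu⟩
  -- (G) y-direction vanishing at each frozen x
  have hyz : ∀ x ∈ Icc (-xs) xs, ∀ j < k, (pd (rect xs ys) e2)^[j] f (x, 0) = 0 := by
    intro x hxm
    apply chainVanish hys hδ hC.le hM2nn (fun j t => (pd (rect xs ys) e2)^[j] f (x, t)) k
    · intro j hj t htm
      have hdiff : DifferentiableOn ℝ ((pd (rect xs ys) e2)^[j] f) (rect xs ys) := by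
        refine (hsm2 j (by omega)).differentiableOn ?_
        exact_mod_cast (by omega : h + k - j ≠ 0)
      show HasDerivWithinAt (fun s => (pd (rect xs ys) e2)^[j] f (x, s))
        ((pd (rect xs ys) e2)^[j+1] f (x, t)) (Icc (-ys) ys) t
      rw [Function.iterate_succ_apply']
      exact hderY hdiff hxm htm
    · intro j hj t htm
      exact hM2 j (by omega) (x, t) ⟨hxm, htm⟩
    · intro t htm htδ
      simpa using hy x hxm t htm htδ
  -- final assembly
  refine ⟨B + 1, by linarith, ?_⟩
  intro x hxm y hym
  have hfin := chainBound hys k (fun j t => (pd (rect xs ys) e2)^[j] f (x, t)) (B * |x| ^ h)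
    (by positivity) ?_ ?_ ?_ y hym
  · have hfx : |f (x, y)| ≤ B * |x| ^ h * |y| ^ k := by simpa using hfin
    have h1 : (0:ℝ) ≤ |x| ^ h * |y| ^ k := by positivity
    nlinarith [hfx]
  · intro j hj t htm
    have hdiff : DifferentiableOn ℝ ((pd (rect xs ys) e2)^[j] f) (rect xs ys) := by
      refine (hsm2 j (by omega)).differentiableOn ?_
      exact_mod_cast (by omega : h + k - j ≠ 0)
    show HasDerivWithinAt (fun s => (pd (rect xs ys) e2)^[j] f (x, s))
      ((pd (rect xs ys) e2)^[j+1] f (x, t)) (Icc (-ys) ys) t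
    rw [Function.iterate_succ_apply']
    exact hderY hdiff hxm htm
  · intro j hj
    exact hyz x hxm j hj
  · intro t htm
    exact hGbd t htm x hxm
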